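/- arXiv:1711.07017 — 2 statements merged into one kernel-verified Lean document; each statement's English description precedes it below -/
import Mathlib

section
/- Let $m \in \mathbb{N}$ and $d \ge 1$. Define knots $\xi^k := ((k/(m+1))^{1/d}, 0, \dots, 0) \in [0,1)^d$ and weights $\lambda_k := 1/(m+1)$ for $k = 1, \dots, m$. Then for every $y \in [0,1)$, $\left| \sum_{k=1}^m \lambda_k \chi_{[\mathbf{0}, (y,\dots,y))}(\xi^k) - y^d \right| \le \frac{1}{m+1}$, where $\chi_{[\mathbf{0},(y,\dots,y))}$ is the characteristic function of the anchored cube $[0,y)^d$. -/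
open MeasureTheory Real
open scoped ENNReal

/-- Numerical integration of characteristic functions of anchored cubes `[0,y)^d` by the
quadrature with knots `ξ^k = ((k/(m+1))^{1/d}, 0, …, 0)` and weights `1/(m+1)`,
`k = 1, …, m`, has error at most `1/(m+1)` for every `y ∈ [0,1)`. -/
theorem stmt7 (m d : ℕ) (hd : 1 ≤ d)
    (ξ : ℕ → Fin d → ℝ)
    (hξ : ∀ k, ξ k = fun j : Fin d => if (j : ℕ) = 0 then ((k : ℝ) / (m + 1)) ^ ((1 : ℝ) / d) else 0)
    (y : ℝ) (hy : y ∈ Set.Ico (0 : ℝ) 1) :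
    |(∑ k ∈ Finset.Icc 1 m, ((m : ℝ) + 1)⁻¹ *
        Set.indicator {x : Fin d → ℝ | ∀ j, 0 ≤ x j ∧ x j < y} (fun _ => (1 : ℝ)) (ξ k))
      - y ^ d| ≤ ((m : ℝ) + 1)⁻¹ := by
  obtain ⟨hy0, hy1⟩ := hy
  have hm1 : (0 : ℝ) < (m : ℝ) + 1 := by positivity
  have hdR : ((d : ℝ)) ≠ 0 := by
    exact_mod_cast Nat.one_le_iff_ne_zero.mp hd
  set t : ℝ := ((m : ℝ) + 1) * y ^ d with ht
  have ht0 : 0 ≤ t := by positivity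
  have htm : t < (m : ℝ) + 1 := by
    have : y ^ d < 1 := pow_lt_one₀ hy0 hy1 (Nat.one_le_iff_ne_zero.mp hd)
    nlinarith
  -- pointwise characterization of the indicator
  have key : ∀ k ∈ Finset.Icc 1 m,
      Set.indicator {x : Fin d → ℝ | ∀ j, 0 ≤ x j ∧ x j < y} (fun _ => (1 : ℝ)) (ξ k)
        = if (k : ℝ) < t then 1 else 0 := by
    intro k hk
    obtain ⟨hk1, hkm⟩ := Finset.mem_Icc.mp hk
    set a : ℝ := (k : ℝ) / ((m : ℝ) + 1) with ha
    have ha0 : 0 ≤ a := by positivity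
    have hroot : (a ^ ((1 : ℝ) / d)) ^ d = a := by
      rw [← Real.rpow_natCast (a ^ ((1 : ℝ) / d)) d, ← Real.rpow_mul ha0,
        one_div, inv_mul_cancel₀ hdR, Real.rpow_one]
    have hmem : (ξ k ∈ {x : Fin d → ℝ | ∀ j, 0 ≤ x j ∧ x j < y}) ↔ (k : ℝ) < t := by
      constructor
      · intro h
        have h0 := h ⟨0, hd⟩
        rw [hξ] at h0
        simp only [if_pos rfl] at h0
        have : a < y ^ d := by
          calc a = (a ^ ((1 : ℝ) / d)) ^ d := hroot.symm
          _ < y ^ d := pow_lt_pow_left₀ h0.2 h0.1 (Nat.one_le_iff_ne_zero.mp hd)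
        rw [ht]
        rw [ha, div_lt_iff₀ hm1] at this
        linarith
      · intro hkt
        have hayd : a < y ^ d := by
          rw [ha, div_lt_iff₀ hm1]
          rw [ht] at hkt; linarith
        have hy0' : 0 < y := by
          rcases lt_or_eq_of_le hy0 with h | h
          · exact h
          · exfalso
            have : (0 : ℝ) < y ^ d := lt_of_le_of_lt ha0 hayd
            rw [← h] at this
            simp [zero_pow (Nat.one_le_iff_ne_zero.mp hd)] at this
        intro j
        rw [hξ]
        by_cases hj : (j : ℕ) = 0
        · simp only [if_pos hj]
          refine ⟨Real.rpow_nonneg ha0 _, ?_⟩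
          have : a ^ ((1 : ℝ) / d) < (y ^ d) ^ ((1 : ℝ) / d) :=
            Real.rpow_lt_rpow ha0 hayd (by positivity)
          calc a ^ ((1 : ℝ) / d) < (y ^ d) ^ ((1 : ℝ) / d) := this
          _ = y := by
            rw [← Real.rpow_natCast y d, ← Real.rpow_mul hy0, mul_one_div,
              div_self hdR, Real.rpow_one]
        · simp only [if_neg hj]
          exact ⟨le_refl 0, hy0'⟩
    rw [Set.indicator_apply]
    simp [hmem]
  -- rewrite the sum
  rw [Finset.sum_congr rfl (fun k hk => by rw [key k hk])]
  rw [← Finset.mul_sum, Finset.sum_boole]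
  set N : ℕ := ((Finset.Icc 1 m).filter (fun k : ℕ => (k : ℝ) < t)).card with hN
  -- characterize the filter
  have hfilter : (Finset.Icc 1 m).filter (fun k : ℕ => (k : ℝ) < t) = Finset.Ico 1 ⌈t⌉₊ := by
    ext k
    simp only [Finset.mem_filter, Finset.mem_Icc, Finset.mem_Ico]
    constructor
    · rintro ⟨⟨h1, _⟩, h2⟩
      exact ⟨h1, Nat.lt_ceil.mpr h2⟩
    · rintro ⟨h1, h2⟩
      have hkt : (k : ℝ) < t := Nat.lt_ceil.mp h2
      refine ⟨⟨h1, ?_⟩, hkt⟩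
      have : (k : ℝ) < (m : ℝ) + 1 := lt_trans hkt htm
      exact_mod_cast Nat.lt_succ_iff.mp (by exact_mod_cast this)
    
  have hcard : N = ⌈t⌉₊ - 1 := by rw [hN, hfilter, Nat.card_Ico]
  have hN1 : (N : ℝ) ≤ t := by
    rcases Nat.eq_zero_or_pos ⌈t⌉₊ with h | h
    · rw [hcard, h]; simpa using ht0
    · have : (N : ℝ) = (⌈t⌉₊ : ℝ) - 1 := by
        rw [hcard]
        have : 1 ≤ ⌈t⌉₊ := h
        push_cast [Nat.cast_sub this]
        ring
      rw [this]
      have := Nat.ceil_lt_add_one ht0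
      linarith
  have hN2 : t ≤ (N : ℝ) + 1 := by
    rcases Nat.eq_zero_or_pos ⌈t⌉₊ with h | h
    · have : t ≤ 0 := by
        by_contra hc
        push_neg at hc
        have := Nat.ceil_pos.mpr hc
        omega
      have hN0 : (0 : ℝ) ≤ (N : ℝ) := Nat.cast_nonneg N
      linarith
    · have hNc : (N : ℝ) + 1 = (⌈t⌉₊ : ℝ) := by
        rw [hcard]
        have : 1 ≤ ⌈t⌉₊ := h
        push_cast [Nat.cast_sub this]
        ring
      rw [hNc]
      exact Nat.le_ceil t
  have hyd : y ^ d = t / ((m : ℝ) + 1) := by field_simp [ht]; rw [ht]; ring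
  rw [hyd]
  have heq : ((m : ℝ) + 1)⁻¹ * (N : ℝ) - t / ((m : ℝ) + 1) = ((N : ℝ) - t) * ((m : ℝ) + 1)⁻¹ := by
    field_simp
  rw [heq, abs_mul, abs_of_pos (inv_pos.mpr hm1)]
  calc |(N : ℝ) - t| * ((m : ℝ) + 1)⁻¹ ≤ 1 * ((m : ℝ) + 1)⁻¹ := by
        apply mul_le_mul_of_nonneg_right _ (le_of_lt (inv_pos.mpr hm1))
        rw [abs_le]
        constructor <;> linarith
  _ = ((m : ℝ) + 1)⁻¹ := one_mul _
end

section
/- Let $E \subset [0,1)^d$ be a Lebesgue measurable set and $2 \le p < \infty$. Then there exists a set $\xi = \{\xi^1,\dots,\xi^m\} \subset [0,1)^d$ of $m$ points such that $\left( \int_{[0,1)^d} \left| |E| - \frac{1}{m}\sum_{\mu=1}^m \tilde\chi_E(\xi^\mu - \mathbf{z}) \right|^p d\mathbf{z} \right)^{1/p} \le C p^{1/2} m^{-1/2}$, where $\tilde\chi_E$ is the 1-periodization of $\chi_E$ and $C$ is an absolute constant. -/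
open MeasureTheory Real
open scoped ENNReal

/-- The unit cube `[0,1)^d`. -/
def unitCube (d : ℕ) : Set (Fin d → ℝ) := Set.univ.pi fun _ => Set.Ico (0 : ℝ) 1

/-- The 1-periodization `tilde χ_E` of the characteristic function of `E`. -/
noncomputable def perChi {d : ℕ} (E : Set (Fin d → ℝ)) (x : Fin d → ℝ) : ℝ :=
  ∑' n : Fin d → ℤ, Set.indicator E (fun _ => (1 : ℝ)) (x + fun j => (n j : ℝ))

namespace Stmt17

variable {d : ℕ}

/-- The periodized set. -/
def perSet (E : Set (Fin d → ℝ)) : Set (Fin d → ℝ) :=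
  ⋃ n : Fin d → ℤ, (fun x => x + fun j => (n j : ℝ)) ⁻¹' E

lemma measurableSet_unitCube : MeasurableSet (unitCube d) :=
  MeasurableSet.univ_pi fun _ => measurableSet_Ico

lemma measurableSet_perSet {E : Set (Fin d → ℝ)} (hE : MeasurableSet E) :
    MeasurableSet (perSet E) :=
  MeasurableSet.iUnion fun n => (measurable_id.add_const _) hE

lemma mem_cube_iff (x : Fin d → ℝ) : x ∈ unitCube d ↔ ∀ j, 0 ≤ x j ∧ x j < 1 := by
  simp [unitCube, Set.mem_pi, Set.mem_Ico]

lemma cube_unique {x : Fin d → ℝ} {n n' : Fin d → ℤ}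
    (h : (x + fun j => (n j : ℝ)) ∈ unitCube d)
    (h' : (x + fun j => (n' j : ℝ)) ∈ unitCube d) : n = n' := by
  rw [mem_cube_iff] at h h'
  funext j
  have h1 := h j
  have h2 := h' j
  simp only [Pi.add_apply] at h1 h2
  have hlt : |((n j : ℝ)) - n' j| < 1 := by
    rw [abs_sub_lt_iff]
    constructor <;> nlinarith [h1.1, h1.2, h2.1, h2.2]
  have hc : ((n j - n' j : ℤ) : ℝ) = (n j : ℝ) - n' j := by push_cast; ring
  have habs : |((n j - n' j : ℤ) : ℝ)| < 1 := by rw [hc]; exact hlt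
  have hz : n j - n' j = 0 := by
    by_contra hne
    have : (1 : ℝ) ≤ |((n j - n' j : ℤ) : ℝ)| := by
      rw [← Int.cast_abs]
      exact_mod_cast Int.one_le_abs hne
    linarith
  omega

lemma cube_exists (x : Fin d → ℝ) : ∃ n : Fin d → ℤ, (x + fun j => (n j : ℝ)) ∈ unitCube d := by
  refine ⟨fun j => -⌊x j⌋, ?_⟩
  rw [mem_cube_iff]
  intro j
  simp only [Pi.add_apply, Int.cast_neg]
  constructor
  · have := Int.floor_le (x j); linarith
  · have := Int.lt_floor_add_one (x j); linarith

lemma E_unique {E : Set (Fin d → ℝ)} (hEc : E ⊆ unitCube d) {x : Fin d → ℝ}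
    {n n' : Fin d → ℤ} (h : (x + fun j => (n j : ℝ)) ∈ E)
    (h' : (x + fun j => (n' j : ℝ)) ∈ E) : n = n' :=
  cube_unique (hEc h) (hEc h')

lemma perChi_eq_indicator {E : Set (Fin d → ℝ)} (hEc : E ⊆ unitCube d) (x : Fin d → ℝ) :
    perChi E x = Set.indicator (perSet E) (fun _ => (1 : ℝ)) x := by
  by_cases hx : x ∈ perSet E
  · obtain ⟨n₀, hn₀⟩ : ∃ n : Fin d → ℤ, (x + fun j => (n j : ℝ)) ∈ E := by
      simpa [perSet] using hx
    rw [Set.indicator_of_mem hx]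
    have : perChi E x = Set.indicator E (fun _ => (1:ℝ)) (x + fun j => ((n₀ j : ℝ))) := by
      refine tsum_eq_single n₀ ?_
      intro n hn
      rw [Set.indicator_of_notMem]
      intro hmem
      exact hn (E_unique hEc hmem hn₀)
    rw [this, Set.indicator_of_mem hn₀]
  · rw [Set.indicator_of_notMem hx]
    have : ∀ n : Fin d → ℤ, Set.indicator E (fun _ => (1:ℝ)) (x + fun j => ((n j : ℝ))) = 0 := by
      intro n
      rw [Set.indicator_of_notMem]
      intro hmem
      exact hx (Set.mem_iUnion.2 ⟨n, hmem⟩)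
    simp only [perChi, this, tsum_zero]


lemma volume_unitCube : volume (unitCube d) = 1 := by
  rw [unitCube, volume_pi_pi]
  simp [Real.volume_Ico]

lemma volume_cube_inter_perSet {E : Set (Fin d → ℝ)} (hE : MeasurableSet E)
    (hEc : E ⊆ unitCube d) (z : Fin d → ℝ) :
    volume (unitCube d ∩ (fun x => x - z) ⁻¹' perSet E) = volume E := by
  classical
  set T : (Fin d → ℤ) → Set (Fin d → ℝ) :=
    fun n => unitCube d ∩ (fun x => (x - z) + fun j => (n j : ℝ)) ⁻¹' E with hT
  have hTmeas : ∀ n, MeasurableSet (T n) := fun n =>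
    measurableSet_unitCube.inter (((measurable_id.sub_const z).add_const _) hE)
  have hsetT : unitCube d ∩ (fun x => x - z) ⁻¹' perSet E = ⋃ n, T n := by
    ext x
    simp only [Set.mem_inter_iff, Set.mem_preimage, perSet, Set.mem_iUnion, hT]
    tauto
  have hTdisj : Pairwise (Function.onFun Disjoint T) := by
    intro n n' hne
    rw [Function.onFun, Set.disjoint_left]
    rintro x ⟨-, hx1⟩ ⟨-, hx2⟩
    exact hne (E_unique hEc hx1 hx2)
  set B : (Fin d → ℤ) → Set (Fin d → ℝ) :=
    fun n => (fun y => (y + z) + fun j => ((-n) j : ℝ)) ⁻¹' unitCube d with hB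
  have hBmeas : ∀ n, MeasurableSet (B n) := fun n =>
    ((measurable_id.add_const z).add_const _) measurableSet_unitCube
  have hTB : ∀ n, volume (T n) = volume (E ∩ B n) := by
    intro n
    set c : Fin d → ℝ := (fun j => (n j : ℝ)) - z with hc
    have : T n = (fun x => x + c) ⁻¹' (E ∩ B n) := by
      ext x
      simp only [hT, hB, Set.mem_inter_iff, Set.mem_preimage]
      have h1 : x - z + (fun j => (n j : ℝ)) = x + c := by rw [hc]; abel
      have h2 : ((x + c) + z) + (fun j => ((-n) j : ℝ)) = x := by
        rw [hc]; funext j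
        simp only [Pi.add_apply, Pi.sub_apply, Pi.neg_apply, Int.cast_neg]
        ring
      rw [h1, h2]
      tauto
    rw [this, measure_preimage_add_right]
  have hBdisj : Pairwise (Function.onFun Disjoint fun n => E ∩ B n) := by
    intro n n' hne
    rw [Function.onFun, Set.disjoint_left]
    rintro y ⟨-, hy1⟩ ⟨-, hy2⟩
    have := cube_unique (x := y + z) (n := -n) (n' := -n') hy1 hy2
    exact hne (by simpa [neg_inj] using this)
  have hBcover : (⋃ n, E ∩ B n) = E := by
    ext y
    simp only [Set.mem_iUnion, Set.mem_inter_iff, hB, Set.mem_preimage]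
    constructor
    · rintro ⟨n, hn, -⟩; exact hn
    · intro hy
      obtain ⟨n', hn'⟩ := cube_exists (y + z)
      exact ⟨-n', hy, by simpa using hn'⟩
  calc volume (unitCube d ∩ (fun x => x - z) ⁻¹' perSet E)
      = ∑' n, volume (T n) := by rw [hsetT, measure_iUnion hTdisj hTmeas]
    _ = ∑' n, volume (E ∩ B n) := by simp only [hTB]
    _ = volume (⋃ n, E ∩ B n) := (measure_iUnion hBdisj fun n => hE.inter (hBmeas n)).symm
    _ = volume E := by rw [hBcover]

lemma setIntegral_indicator_perSet {E : Set (Fin d → ℝ)} (hE : MeasurableSet E)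
    (hEc : E ⊆ unitCube d) (z : Fin d → ℝ) :
    ∫ x in unitCube d, Set.indicator (perSet E) (fun _ => (1 : ℝ)) (x - z)
      = (volume E).toReal := by
  have hW : MeasurableSet ((fun x => x - z) ⁻¹' perSet E) :=
    (measurable_id.sub_const z) (measurableSet_perSet hE)
  have heq : ∀ x : Fin d → ℝ, Set.indicator (perSet E) (fun _ => (1:ℝ)) (x - z)
      = Set.indicator ((fun x => x - z) ⁻¹' perSet E) (fun _ => (1:ℝ)) x := by
    intro x
    by_cases hx : x - z ∈ perSet E
    · simp [Set.indicator_apply, Set.mem_preimage, hx]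
    · simp [Set.indicator_apply, Set.mem_preimage, hx]
  simp_rw [heq]
  rw [MeasureTheory.setIntegral_indicator hW]
  rw [MeasureTheory.setIntegral_const]
  rw [measureReal_def, volume_cube_inter_perSet hE hEc z]
  simp


lemma integral_pi_pow {X : Type*} [MeasurableSpace X] (μ : Measure X) [IsProbabilityMeasure μ]
    (f : X → ℝ) (m : ℕ) :
    ∫ ξ : Fin m → X, ∏ i, f (ξ i) ∂(Measure.pi fun _ : Fin m => μ) = (∫ x, f x ∂μ) ^ m := by
  induction m with
  | zero =>
      simp only [Finset.univ_eq_empty, Finset.prod_empty, integral_const, Measure.pi_univ,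
        Finset.prod_const, measure_univ, one_pow, ENNReal.toReal_one, probReal_univ, smul_eq_mul, mul_one,
        pow_zero]
  | succ n ih =>
      calc ∫ ξ : Fin (n+1) → X, ∏ i, f (ξ i) ∂(Measure.pi fun _ : Fin (n+1) => μ)
          = ∫ y : X × (Fin n → X), f y.1 * ∏ i : Fin n, f (y.2 i)
              ∂(μ.prod (Measure.pi fun _ : Fin n => μ)) := by
            rw [← ((measurePreserving_piFinSuccAbove
              (fun _ : Fin (n+1) => μ) 0).symm).integral_comp']
            refine integral_congr_ae (Filter.Eventually.of_forall fun y => ?_)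
            simp [MeasurableEquiv.piFinSuccAbove_symm_apply, Fin.prod_univ_succ,
              Fin.insertNthEquiv, Fin.insertNth_zero, Fin.zero_succAbove]
        _ = (∫ x, f x ∂μ) * (∫ x, f x ∂μ) ^ n := by
              rw [integral_prod_mul (f := f) (g := fun w : Fin n → X => ∏ i, f (w i)), ih]
        _ = (∫ x, f x ∂μ) ^ (n + 1) := by ring

lemma exp_mul_le_cosh_add {l t : ℝ} (ht : |t| ≤ 1) :
    Real.exp (l * t) ≤ Real.cosh l + t * Real.sinh l := by
  rw [abs_le] at ht
  have ha : (0:ℝ) ≤ (1 - t)/2 := by linarith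
  have hb : (0:ℝ) ≤ (1 + t)/2 := by linarith
  have hab : (1 - t)/2 + (1 + t)/2 = 1 := by ring
  have := convexOn_exp.2 (Set.mem_univ (-l)) (Set.mem_univ l) ha hb hab
  simp only [smul_eq_mul] at this
  have harg : (1 - t)/2 * (-l) + (1 + t)/2 * l = l * t := by ring
  rw [harg] at this
  refine this.trans (le_of_eq ?_)
  rw [Real.cosh_eq, Real.sinh_eq]
  ring

lemma integral_exp_le {X : Type*} [MeasurableSpace X] (μ : Measure X) [IsProbabilityMeasure μ]
    {g : X → ℝ} (hm : Measurable g) (hb : ∀ x, |g x| ≤ 1) (h0 : ∫ x, g x ∂μ = 0) (l : ℝ) :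
    ∫ x, Real.exp (l * g x) ∂μ ≤ Real.exp (l ^ 2 / 2) := by
  have hgint : Integrable g μ :=
    (integrable_const (1:ℝ)).mono' hm.aestronglyMeasurable
      (Filter.Eventually.of_forall fun x => by simpa using hb x)
  have hexpint : Integrable (fun x => Real.exp (l * g x)) μ := by
    refine (integrable_const (Real.exp |l|)).mono' ((hm.const_mul l).exp).aestronglyMeasurable
      (Filter.Eventually.of_forall fun x => ?_)
    rw [Real.norm_eq_abs, abs_of_pos (Real.exp_pos _)]
    apply Real.exp_le_exp.2
    calc l * g x ≤ |l * g x| := le_abs_self _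
      _ = |l| * |g x| := abs_mul _ _
      _ ≤ |l| * 1 := by nlinarith [abs_nonneg l, hb x]
      _ = |l| := mul_one _
  have hrint : Integrable (fun x => Real.cosh l + g x * Real.sinh l) μ :=
    (integrable_const _).add (hgint.mul_const _)
  calc ∫ x, Real.exp (l * g x) ∂μ
      ≤ ∫ x, (Real.cosh l + g x * Real.sinh l) ∂μ :=
        integral_mono hexpint hrint fun x => exp_mul_le_cosh_add (hb x)
    _ = Real.cosh l + (∫ x, g x ∂μ) * Real.sinh l := by
        rw [integral_add (integrable_const _) (hgint.mul_const _), integral_const,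
          integral_mul_const]
        simp
    _ = Real.cosh l := by rw [h0]; ring
    _ ≤ Real.exp (l ^ 2 / 2) := Real.cosh_le_exp_half_sq l

lemma rpow_abs_le {p l : ℝ} (hp : 0 < p) (hl : 0 < l) (s : ℝ) :
    |s| ^ p ≤ (p / (l * Real.exp 1)) ^ p * (Real.exp (l * s) + Real.exp (-(l * s))) := by
  have hbase : 0 < p / (l * Real.exp 1) := by positivity
  have hK : 0 < (p / (l * Real.exp 1)) ^ p := Real.rpow_pos_of_pos hbase p
  have step1 : Real.exp (l * |s|) ≤ Real.exp (l * s) + Real.exp (-(l * s)) := by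
    rcases le_or_gt 0 s with h | h
    · rw [abs_of_nonneg h]
      exact le_add_of_nonneg_right (Real.exp_pos _).le
    · rw [abs_of_neg h]
      have : l * -s = -(l * s) := by ring
      rw [this]
      exact le_add_of_nonneg_left (Real.exp_pos _).le
  have step2 : |s| ^ p ≤ (p / (l * Real.exp 1)) ^ p * Real.exp (l * |s|) := by
    rcases eq_or_lt_of_le (abs_nonneg s) with h | h
    · rw [← h, Real.zero_rpow hp.ne']
      positivity
    · set t := |s| with htdef
      rw [Real.rpow_def_of_pos h]
      have hKe : (p / (l * Real.exp 1)) ^ p * Real.exp (l * t)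
          = Real.exp (p * Real.log (p / (l * Real.exp 1)) + l * t) := by
        rw [Real.exp_add, ← Real.log_rpow hbase, Real.exp_log hK]
      rw [hKe]
      apply Real.exp_le_exp.2
      have hu : 0 < l * t / p := by positivity
      have hlog := Real.log_le_sub_one_of_pos hu
      have hlt : Real.log (l * t / p) = Real.log l + Real.log t - Real.log p := by
        rw [Real.log_div (by positivity) hp.ne', Real.log_mul hl.ne' h.ne']
      have hlp : Real.log (p / (l * Real.exp 1)) = Real.log p - Real.log l - 1 := by
        rw [Real.log_div hp.ne' (by positivity), Real.log_mul hl.ne' (Real.exp_ne_zero 1),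
          Real.log_exp]
        ring
      rw [hlp]
      rw [hlt] at hlog
      have hh : Real.log l + Real.log t - Real.log p ≤ l * t / p - 1 := hlog
      have := mul_le_mul_of_nonneg_left hh hp.le
      have hpt : p * (l * t / p) = l * t := by field_simp
      nlinarith
  calc |s| ^ p ≤ (p / (l * Real.exp 1)) ^ p * Real.exp (l * |s|) := step2
    _ ≤ _ := by
        apply mul_le_mul_of_nonneg_left step1 hK.le


lemma main {d : ℕ} {E : Set (Fin d → ℝ)} (hE : MeasurableSet E) (hEc : E ⊆ unitCube d)
    {p : ℝ} (hp : 2 ≤ p) {m : ℕ} (hm : 1 ≤ m) :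
    ∃ ξ : Fin m → Fin d → ℝ, (∀ i, ξ i ∈ unitCube d) ∧
      (∫ z in unitCube d,
          |(volume E).toReal
            - (m : ℝ)⁻¹ * ∑ i, Set.indicator (perSet E) (fun _ => (1:ℝ)) (ξ i - z)| ^ p)
        ≤ 2 * p ^ (p/2) * (m:ℝ) ^ (-(p/2)) := by
  classical
  have hp0 : (0:ℝ) < p := by linarith
  have hm0 : (0:ℝ) < (m:ℝ) := by exact_mod_cast hm
  set μz : Measure (Fin d → ℝ) := volume.restrict (unitCube d) with hμz
  haveI hprob : IsProbabilityMeasure μz :=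
    ⟨by rw [hμz, Measure.restrict_apply_univ]; exact volume_unitCube⟩
  set Pi : Measure (Fin m → Fin d → ℝ) := Measure.pi (fun _ : Fin m => μz) with hPi
  haveI : IsProbabilityMeasure Pi := by rw [hPi]; infer_instance
  set v : ℝ := (volume E).toReal with hv
  have hv0 : 0 ≤ v := ENNReal.toReal_nonneg
  have hv1 : v ≤ 1 := by
    have h1 : volume E ≤ 1 := (measure_mono hEc).trans_eq volume_unitCube
    have := ENNReal.toReal_mono ENNReal.one_ne_top h1
    simpa using this
  set ind : (Fin d → ℝ) → ℝ := Set.indicator (perSet E) (fun _ => (1:ℝ)) with hind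
  have hindm : Measurable ind := measurable_const.indicator (measurableSet_perSet hE)
  have hind01 : ∀ y, 0 ≤ ind y ∧ ind y ≤ 1 := by
    intro y
    by_cases hy : y ∈ perSet E <;> simp [hind, Set.indicator_apply, hy]
  set g : (Fin d → ℝ) → (Fin d → ℝ) → ℝ := fun z x => ind (x - z) - v with hg
  have hgm : ∀ z, Measurable (g z) := fun z =>
    (hindm.comp (measurable_id.sub_const z)).sub_const v
  have hgb : ∀ z x, |g z x| ≤ 1 := by
    intro z x
    rw [abs_le]
    obtain ⟨h1, h2⟩ := hind01 (x - z)
    constructor <;> simp [hg] <;> linarith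
  have hg0 : ∀ z, ∫ x, g z x ∂μz = 0 := by
    intro z
    have hii : Integrable (fun x => ind (x - z)) μz :=
      (integrable_const (1:ℝ)).mono'
        ((hindm.comp (measurable_id.sub_const z)).aestronglyMeasurable)
        (Filter.Eventually.of_forall fun x => by
          rw [Real.norm_eq_abs, abs_of_nonneg (hind01 _).1]; exact (hind01 _).2)
    simp only [hg]
    rw [integral_sub hii (integrable_const v), integral_const]
    simp only [measure_univ, ENNReal.toReal_one, probReal_univ, one_smul]
    rw [hμz]
    rw [setIntegral_indicator_perSet hE hEc z]
    simp [hv]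
  -- the exponential parameter
  set l : ℝ := Real.sqrt (p / m) with hl
  have hl0 : 0 < l := Real.sqrt_pos.2 (by positivity)
  have hlsq : l ^ 2 = p / m := Real.sq_sqrt (by positivity)
  -- moment bound for fixed z
  have claim3 : ∀ z, ∫ ξ, |∑ i, g z (ξ i)| ^ p ∂Pi ≤ 2 * (p * m) ^ (p/2) := by
    intro z
    set K : ℝ := (p / (l * Real.exp 1)) ^ p with hK
    have hK0 : 0 < K := Real.rpow_pos_of_pos (by positivity) p
    have hSm : ∀ ξ : Fin m → Fin d → ℝ, |∑ i, g z (ξ i)| ≤ m := by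
      intro ξ
      calc |∑ i, g z (ξ i)| ≤ ∑ i, |g z (ξ i)| := Finset.abs_sum_le_sum_abs _ _
        _ ≤ ∑ _i : Fin m, (1:ℝ) := Finset.sum_le_sum fun i _ => hgb z (ξ i)
        _ = m := by simp
    have hSmeas : Measurable fun ξ : Fin m → Fin d → ℝ => ∑ i, g z (ξ i) :=
      Finset.measurable_sum _ fun i _ => (hgm z).comp (measurable_pi_apply i)
    have hexp : ∀ l' : ℝ,
        Integrable (fun ξ : Fin m → Fin d → ℝ => Real.exp (l' * ∑ i, g z (ξ i))) Pi := by
      intro l'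
      refine (integrable_const (Real.exp (|l'| * m))).mono'
        ((hSmeas.const_mul l').exp).aestronglyMeasurable
        (Filter.Eventually.of_forall fun ξ => ?_)
      rw [Real.norm_eq_abs, abs_of_pos (Real.exp_pos _)]
      apply Real.exp_le_exp.2
      calc l' * ∑ i, g z (ξ i) ≤ |l' * ∑ i, g z (ξ i)| := le_abs_self _
        _ = |l'| * |∑ i, g z (ξ i)| := abs_mul _ _
        _ ≤ |l'| * m := by
            have := hSm ξ
            nlinarith [abs_nonneg l', abs_nonneg (∑ i, g z (ξ i))]
    have hmgf : ∀ l' : ℝ, ∫ ξ, Real.exp (l' * ∑ i, g z (ξ i)) ∂Pi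
        ≤ Real.exp ((m : ℝ) * (l' ^ 2 / 2)) := by
      intro l'
      have heq : (fun ξ : Fin m → Fin d → ℝ => Real.exp (l' * ∑ i, g z (ξ i)))
          = fun ξ => ∏ i, Real.exp (l' * g z (ξ i)) := by
        funext ξ
        rw [Finset.mul_sum, Real.exp_sum]
      rw [heq, hPi, integral_pi_pow μz (fun x => Real.exp (l' * g z x)) m]
      have h1 : ∫ x, Real.exp (l' * g z x) ∂μz ≤ Real.exp (l' ^ 2 / 2) :=
        integral_exp_le μz (hgm z) (hgb z) (hg0 z) l'
      have h2 : 0 ≤ ∫ x, Real.exp (l' * g z x) ∂μz :=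
        integral_nonneg fun x => (Real.exp_pos _).le
      calc (∫ x, Real.exp (l' * g z x) ∂μz) ^ m ≤ (Real.exp (l' ^ 2 / 2)) ^ m :=
            pow_le_pow_left₀ h2 h1 m
        _ = Real.exp ((m : ℝ) * (l' ^ 2 / 2)) := by rw [← Real.exp_nat_mul]
    have hpoint : ∀ ξ : Fin m → Fin d → ℝ, |∑ i, g z (ξ i)| ^ p
        ≤ K * (Real.exp (l * ∑ i, g z (ξ i)) + Real.exp (-(l * ∑ i, g z (ξ i)))) :=
      fun ξ => rpow_abs_le hp0 hl0 _
    have hlhs_int : Integrable (fun ξ : Fin m → Fin d → ℝ => |∑ i, g z (ξ i)| ^ p) Pi := by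
      refine (integrable_const ((m:ℝ) ^ p)).mono'
        (((Real.continuous_rpow_const hp0.le).measurable.comp hSmeas.abs).aestronglyMeasurable)
        (Filter.Eventually.of_forall fun ξ => ?_)
      rw [Real.norm_eq_abs, abs_of_nonneg (Real.rpow_nonneg (abs_nonneg _) p)]
      exact Real.rpow_le_rpow (abs_nonneg _) (hSm ξ) hp0.le
    have hneg : ∀ ξ : Fin m → Fin d → ℝ, -(l * ∑ i, g z (ξ i)) = (-l) * ∑ i, g z (ξ i) := by
      intro ξ; ring
    calc ∫ ξ, |∑ i, g z (ξ i)| ^ p ∂Pi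
        ≤ ∫ ξ, K * (Real.exp (l * ∑ i, g z (ξ i)) + Real.exp (-(l * ∑ i, g z (ξ i)))) ∂Pi := by
          refine integral_mono hlhs_int ?_ hpoint
          simp_rw [hneg]
          exact ((hexp l).add (hexp (-l))).const_mul K
      _ = K * ((∫ ξ, Real.exp (l * ∑ i, g z (ξ i)) ∂Pi)
            + ∫ ξ, Real.exp ((-l) * ∑ i, g z (ξ i)) ∂Pi) := by
          simp_rw [hneg]
          rw [integral_const_mul, integral_add (hexp l) (hexp (-l))]
      _ ≤ K * (Real.exp ((m : ℝ) * (l ^ 2 / 2)) + Real.exp ((m : ℝ) * ((-l) ^ 2 / 2))) := by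
          have h1 := hmgf l
          have h2 := hmgf (-l)
          nlinarith [hK0]
      _ = 2 * (K * Real.exp (p / 2)) := by
          have : (m : ℝ) * (l ^ 2 / 2) = p / 2 := by
            rw [hlsq]; field_simp
          rw [neg_sq, this]
          ring
      _ ≤ 2 * (p * m) ^ (p/2) := by
          have hKe : K * Real.exp (p / 2) ≤ (p * m) ^ (p/2) := by
            have hpl : p / l = Real.sqrt (p * m) := by
              rw [eq_comm, eq_div_iff hl0.ne']
              rw [hl, ← Real.sqrt_mul (by positivity)]
              rw [show p * (m:ℝ) * (p / m) = p ^ 2 by field_simp]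
              exact Real.sqrt_sq hp0.le
            have hKval : K = (p / l) ^ p * (Real.exp 1) ^ (-p) := by
              rw [hK, div_mul_eq_div_div, Real.div_rpow (by positivity) (Real.exp_pos 1).le,
                Real.rpow_neg (Real.exp_pos 1).le, div_eq_mul_inv]
            have hsq : (Real.sqrt (p * m)) ^ p = (p * m) ^ (p/2) := by
              rw [Real.sqrt_eq_rpow, ← Real.rpow_mul (by positivity)]
              congr 1; ring
            rw [hKval, hpl, hsq]
            have hee : (Real.exp 1) ^ (-p) * Real.exp (p/2) = Real.exp (-(p/2)) := by
              rw [Real.exp_one_rpow (-p), ← Real.exp_add]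
              congr 1; ring
            calc (p * m) ^ (p/2) * (Real.exp 1) ^ (-p) * Real.exp (p / 2)
                = (p * m) ^ (p/2) * Real.exp (-(p/2)) := by rw [mul_assoc, hee]
              _ ≤ (p * m) ^ (p/2) * 1 := by
                  apply mul_le_mul_of_nonneg_left _ (Real.rpow_nonneg (by positivity) _)
                  exact Real.exp_le_one_iff.2 (by linarith)
              _ = (p * m) ^ (p/2) := mul_one _
          linarith
  -- joint integrand
  set F : (Fin m → Fin d → ℝ) × (Fin d → ℝ) → ℝ :=
    fun q => |v - (m:ℝ)⁻¹ * ∑ i, ind (q.1 i - q.2)| ^ p with hF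
  set B : ℝ := 2 * p ^ (p/2) * (m:ℝ) ^ (-(p/2)) with hB
  have hFmeas : Measurable F := by
    apply (Real.continuous_rpow_const hp0.le).measurable.comp
    apply Measurable.abs
    apply Measurable.sub measurable_const
    apply Measurable.const_mul
    apply Finset.measurable_sum
    intro i _
    exact hindm.comp (((measurable_pi_apply i).comp measurable_fst).sub measurable_snd)
  have hF01 : ∀ q, 0 ≤ F q ∧ F q ≤ 1 := by
    intro q
    refine ⟨Real.rpow_nonneg (abs_nonneg _) p, ?_⟩
    apply Real.rpow_le_one (abs_nonneg _) _ hp0.le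
    rw [abs_le]
    have h1 : 0 ≤ (m:ℝ)⁻¹ * ∑ i, ind (q.1 i - q.2) :=
      mul_nonneg (by positivity) (Finset.sum_nonneg fun i _ => (hind01 _).1)
    have hs : ∑ i, ind (q.1 i - q.2) ≤ (m:ℝ) := by
      calc ∑ i, ind (q.1 i - q.2) ≤ ∑ _i : Fin m, (1:ℝ) :=
            Finset.sum_le_sum fun i _ => (hind01 _).2
        _ = m := by simp
    have h2 : (m:ℝ)⁻¹ * ∑ i, ind (q.1 i - q.2) ≤ 1 := by
      calc (m:ℝ)⁻¹ * ∑ i, ind (q.1 i - q.2) ≤ (m:ℝ)⁻¹ * m :=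
            mul_le_mul_of_nonneg_left hs (by positivity)
        _ = 1 := by field_simp
    constructor <;> linarith
  have hFint : Integrable F (Pi.prod μz) :=
    (integrable_const (1:ℝ)).mono' hFmeas.aestronglyMeasurable
      (Filter.Eventually.of_forall fun q => by
        rw [Real.norm_eq_abs, abs_of_nonneg (hF01 q).1]; exact (hF01 q).2)
  have claim4 : ∀ z, ∫ ξ, F (ξ, z) ∂Pi ≤ B := by
    intro z
    have hrw : ∀ ξ : Fin m → Fin d → ℝ,
        F (ξ, z) = ((m:ℝ)⁻¹) ^ p * |∑ i, g z (ξ i)| ^ p := by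
      intro ξ
      have hsum : ∑ i, g z (ξ i) = (∑ i, ind (ξ i - z)) - m * v := by
        simp only [hg]
        rw [Finset.sum_sub_distrib, Finset.sum_const, Finset.card_univ, Fintype.card_fin,
          nsmul_eq_mul]
      have h1 : v - (m:ℝ)⁻¹ * ∑ i, ind (ξ i - z) = -((m:ℝ)⁻¹ * ∑ i, g z (ξ i)) := by
        rw [hsum]
        have hmne : (m:ℝ) ≠ 0 := hm0.ne'
        field_simp
        ring
      show |v - (m:ℝ)⁻¹ * ∑ i, ind (ξ i - z)| ^ p = ((m:ℝ)⁻¹) ^ p * |∑ i, g z (ξ i)| ^ p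
      rw [h1, abs_neg, abs_mul, abs_of_nonneg (inv_nonneg.2 hm0.le),
        Real.mul_rpow (inv_nonneg.2 hm0.le) (abs_nonneg _)]
    calc ∫ ξ, F (ξ, z) ∂Pi
        = ((m:ℝ)⁻¹) ^ p * ∫ ξ, |∑ i, g z (ξ i)| ^ p ∂Pi := by
          simp_rw [hrw]; rw [integral_const_mul]
      _ ≤ ((m:ℝ)⁻¹) ^ p * (2 * (p * m) ^ (p/2)) :=
          mul_le_mul_of_nonneg_left (claim3 z) (Real.rpow_nonneg (by positivity) p)
      _ = 2 * p ^ (p/2) * ((m:ℝ) ^ (-p) * (m:ℝ) ^ (p/2)) := by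
          rw [Real.inv_rpow hm0.le, ← Real.rpow_neg hm0.le,
            Real.mul_rpow hp0.le hm0.le]
          ring
      _ = B := by
          rw [← Real.rpow_add hm0]
          have : -p + p/2 = -(p/2) := by ring
          rw [this, hB]
  have hswap : ∫ ξ, (∫ z, F (ξ, z) ∂μz) ∂Pi = ∫ z, (∫ ξ, F (ξ, z) ∂Pi) ∂μz :=
    integral_integral_swap hFint
  have hGint : Integrable (fun ξ => ∫ z, F (ξ, z) ∂μz) Pi := hFint.integral_prod_left
  have hGB : ∫ ξ, (∫ z, F (ξ, z) ∂μz) ∂Pi ≤ B := by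
    rw [hswap]
    have hInt2 : Integrable (fun z => ∫ ξ, F (ξ, z) ∂Pi) μz := hFint.integral_prod_right
    calc ∫ z, (∫ ξ, F (ξ, z) ∂Pi) ∂μz ≤ ∫ _z, B ∂μz :=
          integral_mono hInt2 (integrable_const B) claim4
      _ = B := by simp
  set A : Set (Fin m → Fin d → ℝ) := Set.univ.pi (fun _ => unitCube d) with hA
  have hAmeas : MeasurableSet A := MeasurableSet.univ_pi fun _ => measurableSet_unitCube
  have hA1 : Pi A = 1 := by
    rw [hPi, hA, Measure.pi_pi]
    simp [hμz, Measure.restrict_apply_self, volume_unitCube]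
  have hexists : ∃ ξ ∈ A, ∫ z, F (ξ, z) ∂μz ≤ B := by
    by_contra hcon
    push_neg at hcon
    have hae : ∀ᵐ ξ ∂Pi, ξ ∈ A := by
      rw [ae_iff]
      have hle : Pi {ξ | ¬ ξ ∈ A} = Pi Aᶜ := rfl
      rw [hle, measure_compl hAmeas (by rw [hA1]; exact ENNReal.one_ne_top), measure_univ, hA1]
      simp
    set h : (Fin m → Fin d → ℝ) → ℝ := fun ξ => (∫ z, F (ξ, z) ∂μz) - B with hh
    have hhint : Integrable h Pi := hGint.sub (integrable_const B)
    have hnn : 0 ≤ᵐ[Pi] h := hae.mono fun ξ hξ => by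
      have := hcon ξ hξ
      show (0:ℝ) ≤ (∫ z, F (ξ, z) ∂μz) - B
      linarith
    have hpos : 0 < ∫ ξ, h ξ ∂Pi := by
      rw [integral_pos_iff_support_of_nonneg_ae hnn hhint]
      have hsub : A ⊆ Function.support h := fun ξ hξ => by
        have := hcon ξ hξ
        simp only [Function.mem_support, hh]
        intro hzero
        linarith [sub_eq_zero.1 hzero]
      calc (0:ℝ≥0∞) < 1 := by norm_num
        _ = Pi A := hA1.symm
        _ ≤ Pi (Function.support h) := measure_mono hsub
    have heval : ∫ ξ, h ξ ∂Pi = (∫ ξ, (∫ z, F (ξ, z) ∂μz) ∂Pi) - B := by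
      simp only [hh]
      rw [integral_sub hGint (integrable_const B), integral_const]
      simp
    rw [heval] at hpos
    linarith
  obtain ⟨ξ, hξA, hξB⟩ := hexists
  refine ⟨ξ, fun i => hξA i (Set.mem_univ i), ?_⟩
  exact hξB


end Stmt17

/-- For any measurable `E ⊆ [0,1)^d` and `2 ≤ p < ∞`, there is a set `ξ` of `m` points with
`(∫_{[0,1)^d} | |E| - (1/m) ∑_μ tilde χ_E(ξ^μ - z) |^p dz)^{1/p} ≤ C p^{1/2} m^{-1/2}`,
where `C` is an absolute constant. -/
theorem stmt17 :
    ∃ C : ℝ, 0 < C ∧ ∀ d : ℕ, 1 ≤ d → ∀ E : Set (Fin d → ℝ),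
      MeasurableSet E → E ⊆ unitCube d → ∀ p : ℝ, 2 ≤ p → ∀ m : ℕ, 1 ≤ m →
      ∃ ξ : Fin m → Fin d → ℝ, (∀ μ, ξ μ ∈ unitCube d) ∧
        (∫ z in unitCube d,
            |(volume E).toReal - (m : ℝ)⁻¹ * ∑ μ, perChi E (ξ μ - z)| ^ p) ^ (1 / p)
          ≤ C * p ^ ((1 : ℝ) / 2) * (m : ℝ) ^ (-(1 : ℝ) / 2) := by
  refine ⟨2, by norm_num, fun d _hd E hE hEc p hp m hm => ?_⟩
  have hp0 : (0:ℝ) < p := by linarith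
  have hm0 : (0:ℝ) < (m:ℝ) := by exact_mod_cast hm
  obtain ⟨ξ, hξcube, hξ⟩ := Stmt17.main hE hEc hp hm
  refine ⟨ξ, hξcube, ?_⟩
  have hrw : (∫ z in unitCube d,
      |(volume E).toReal - (m : ℝ)⁻¹ * ∑ μ, perChi E (ξ μ - z)| ^ p)
      = ∫ z in unitCube d,
      |(volume E).toReal
        - (m : ℝ)⁻¹ * ∑ i, Set.indicator (Stmt17.perSet E) (fun _ => (1:ℝ)) (ξ i - z)| ^ p := by
    apply integral_congr_ae
    refine Filter.Eventually.of_forall fun z => ?_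
    simp_rw [Stmt17.perChi_eq_indicator hEc]
  rw [hrw]
  have hI0 : 0 ≤ ∫ z in unitCube d,
      |(volume E).toReal
        - (m : ℝ)⁻¹ * ∑ i, Set.indicator (Stmt17.perSet E) (fun _ => (1:ℝ)) (ξ i - z)| ^ p :=
    integral_nonneg fun z => Real.rpow_nonneg (abs_nonneg _) p
  have hmono := Real.rpow_le_rpow hI0 hξ (by positivity : (0:ℝ) ≤ 1/p)
  refine hmono.trans ?_
  have h2 : (2 * p ^ (p/2) * (m:ℝ) ^ (-(p/2))) ^ (1/p)
      = (2:ℝ) ^ (1/p) * p ^ ((1:ℝ)/2) * (m:ℝ) ^ (-(1:ℝ)/2) := by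
    rw [Real.mul_rpow (by positivity) (Real.rpow_nonneg hm0.le _),
      Real.mul_rpow (by norm_num) (Real.rpow_nonneg hp0.le _),
      ← Real.rpow_mul hp0.le, ← Real.rpow_mul hm0.le]
    have e1 : p/2 * (1/p) = (1:ℝ)/2 := by field_simp
    have e2 : -(p/2) * (1/p) = -(1:ℝ)/2 := by field_simp
    rw [e1, e2]
  rw [h2]
  have h3 : (2:ℝ) ^ (1/p) ≤ 2 := by
    calc (2:ℝ) ^ (1/p) ≤ (2:ℝ) ^ (1:ℝ) :=
          Real.rpow_le_rpow_of_exponent_le (by norm_num)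
            (by rw [div_le_one hp0]; linarith)
      _ = 2 := Real.rpow_one 2
  have hp12 : (0:ℝ) ≤ p ^ ((1:ℝ)/2) := Real.rpow_nonneg hp0.le _
  have hm12 : (0:ℝ) ≤ (m:ℝ) ^ (-(1:ℝ)/2) := Real.rpow_nonneg hm0.le _
  calc (2:ℝ) ^ (1/p) * p ^ ((1:ℝ)/2) * (m:ℝ) ^ (-(1:ℝ)/2)
      ≤ 2 * p ^ ((1:ℝ)/2) * (m:ℝ) ^ (-(1:ℝ)/2) := by
        apply mul_le_mul_of_nonneg_right _ hm12
        exact mul_le_mul_of_nonneg_right h3 hp12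
    _ = 2 * p ^ ((1:ℝ)/2) * (m:ℝ) ^ (-(1:ℝ)/2) := rfl
end
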